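/- There exists a function Ψ : [0,∞) → (0,∞) satisfying Ψ(x) ≍ Ψ(x²) for all x ≥ 0 which is neither essentially increasing nor essentially decreasing. -/

import Mathlib

open MeasureTheory Real Set

/-- `Ψ` is essentially increasing on `[0,∞)`. -/
def EssInc (Ψ : ℝ → ℝ) : Prop := ∃ C > (0:ℝ), ∀ x y : ℝ, 0 ≤ x → x ≤ y → Ψ x ≤ C * Ψ y

/-- `Ψ` is essentially decreasing on `[0,∞)`. -/
def EssDec (Ψ : ℝ → ℝ) : Prop := ∃ C > (0:ℝ), ∀ x y : ℝ, 0 ≤ x → x ≤ y → Ψ y ≤ C * Ψ x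

/-- The doubling property `Ψ(x) ≍ Ψ(x²)` on `[0,∞)`. -/
def Doubling (Ψ : ℝ → ℝ) : Prop :=
  ∃ c > (0:ℝ), ∃ C > (0:ℝ), ∀ x : ℝ, 0 ≤ x → c * Ψ (x ^ 2) ≤ Ψ x ∧ Ψ x ≤ C * Ψ (x ^ 2)

/-- The class `𝓛`: positive, essentially monotonic, doubling. -/
def InL (Ψ : ℝ → ℝ) : Prop :=
  (∀ x : ℝ, 0 ≤ x → 0 < Ψ x) ∧ (EssInc Ψ ∨ EssDec Ψ) ∧ Doubling Ψ

noncomputable def gFun (t : ℝ) : ℝ := t * Real.sin (Real.log (t + 1))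

noncomputable def LFun (x : ℝ) : ℝ := Real.log (Real.log (max x 3))

lemma abs_sin_sub_sin' (a b : ℝ) : |Real.sin a - Real.sin b| ≤ |a - b| := by
  rw [Real.sin_sub_sin]
  have h1 : |Real.sin ((a - b)/2)| ≤ |(a-b)/2| := Real.abs_sin_le_abs
  have h2 : |Real.cos ((a + b)/2)| ≤ 1 := Real.abs_cos_le_one _
  calc |2 * Real.sin ((a - b)/2) * Real.cos ((a + b)/2)|
      = 2 * |Real.sin ((a-b)/2)| * |Real.cos ((a+b)/2)| := by
        rw [abs_mul, abs_mul, abs_two]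
    _ ≤ 2 * |(a-b)/2| * 1 := by
        apply mul_le_mul (by nlinarith [abs_nonneg (Real.sin ((a-b)/2))]) h2
          (abs_nonneg _) (by positivity)
    _ = |a - b| := by rw [abs_div, mul_one]; simp [abs_two]; ring

lemma gFun_incr {t s : ℝ} (ht : 0 ≤ t) (hts : t ≤ s) : |gFun s - gFun t| ≤ 2 * (s - t) := by
  have hlog : |Real.log (s+1) - Real.log (t+1)| ≤ (s - t) / (t + 1) := by
    have h1 : (0:ℝ) < t + 1 := by linarith
    have h2 : (0:ℝ) < s + 1 := by linarith
    have hle : Real.log (t+1) ≤ Real.log (s+1) :=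
      Real.log_le_log h1 (by linarith)
    rw [abs_of_nonneg (by linarith)]
    have : Real.log (s+1) - Real.log (t+1) = Real.log ((s+1)/(t+1)) := by
      rw [Real.log_div h2.ne' h1.ne']
    rw [this]
    have := Real.log_le_sub_one_of_pos (div_pos h2 h1)
    have : Real.log ((s+1)/(t+1)) ≤ (s+1)/(t+1) - 1 := this
    calc Real.log ((s+1)/(t+1)) ≤ (s+1)/(t+1) - 1 := this
      _ = (s - t)/(t+1) := by field_simp; ring
  have key : gFun s - gFun t
      = (s - t) * Real.sin (Real.log (s+1))
        + t * (Real.sin (Real.log (s+1)) - Real.sin (Real.log (t+1))) := by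
    unfold gFun; ring
  rw [key]
  have h1 : |(s - t) * Real.sin (Real.log (s+1))| ≤ s - t := by
    rw [abs_mul]
    calc |s - t| * |Real.sin (Real.log (s+1))| ≤ |s - t| * 1 :=
        mul_le_mul_of_nonneg_left (Real.abs_sin_le_one _) (abs_nonneg _)
      _ = s - t := by rw [mul_one, abs_of_nonneg (by linarith)]
  have h2 : |t * (Real.sin (Real.log (s+1)) - Real.sin (Real.log (t+1)))| ≤ s - t := by
    rw [abs_mul, abs_of_nonneg ht]
    calc t * |Real.sin (Real.log (s+1)) - Real.sin (Real.log (t+1))|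
        ≤ t * ((s - t)/(t+1)) :=
          mul_le_mul_of_nonneg_left ((abs_sin_sub_sin' _ _).trans hlog) ht
      _ ≤ s - t := by
          rw [mul_div_assoc'] at *
          rw [div_le_iff₀ (by linarith : (0:ℝ) < t+1)]
          nlinarith
  calc |(s - t) * Real.sin (Real.log (s+1))
        + t * (Real.sin (Real.log (s+1)) - Real.sin (Real.log (t+1)))|
      ≤ |(s - t) * Real.sin (Real.log (s+1))|
        + |t * (Real.sin (Real.log (s+1)) - Real.sin (Real.log (t+1)))| := abs_add_le _ _
    _ ≤ 2 * (s - t) := by linarith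

lemma one_lt_log_three : 1 < Real.log 3 := by
  rw [show (1:ℝ) = Real.log (Real.exp 1) by rw [Real.log_exp]]
  exact Real.log_lt_log (Real.exp_pos 1) (by linarith [Real.exp_one_lt_d9])

lemma log_max_pos (x : ℝ) : 1 < Real.log (max x 3) :=
  lt_of_lt_of_le one_lt_log_three (Real.log_le_log (by norm_num) (le_max_right _ _))

lemma LFun_nonneg (x : ℝ) : 0 ≤ LFun x :=
  Real.log_nonneg (le_of_lt (log_max_pos x))

lemma LFun_sq {x : ℝ} (hx : 0 ≤ x) : LFun x ≤ LFun (x^2) ∧ LFun (x^2) ≤ LFun x + 1 := by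
  set m := max x 3 with hm
  set m2 := max (x^2) 3 with hm2
  have hm3 : (3:ℝ) ≤ m := le_max_right _ _
  have hmpos : (0:ℝ) < m := by linarith
  have h1 : m ≤ m2 := by
    apply max_le _ (le_max_right _ _)
    rcases le_total x 3 with h | h
    · exact h.trans (le_max_right _ _)
    · exact le_trans (by nlinarith) (le_max_left (x^2) 3)
  have h2 : m2 ≤ m^2 := by
    apply max_le
    · exact pow_le_pow_left₀ hx (le_max_left _ _) 2
    · nlinarith
  have hlm : 1 < Real.log m := log_max_pos x
  have hlm2 : 1 < Real.log m2 := log_max_pos (x^2)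
  constructor
  · exact Real.log_le_log (by linarith) (Real.log_le_log hmpos h1)
  · have : Real.log m2 ≤ 2 * Real.log m := by
      have := Real.log_le_log (by positivity) h2
      rwa [Real.log_pow, Nat.cast_ofNat, show ((2:ℝ)) * Real.log m = 2 * Real.log m from rfl] at this
    calc LFun (x^2) = Real.log (Real.log m2) := rfl
      _ ≤ Real.log (2 * Real.log m) := Real.log_le_log (by linarith) this
      _ = Real.log 2 + Real.log (Real.log m) := Real.log_mul (by norm_num) (by linarith)
      _ ≤ LFun x + 1 := by
          have : Real.log 2 ≤ 1 := by
            linarith [Real.log_le_sub_one_of_pos (by norm_num : (0:ℝ) < 2)]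
          unfold LFun; linarith

noncomputable def EFun (t : ℝ) : ℝ := Real.exp (Real.exp t)

lemma EFun_mono : Monotone EFun := fun a b h =>
  Real.exp_le_exp.2 (Real.exp_le_exp.2 h)

lemma LFun_EFun {t : ℝ} (ht : 1 ≤ t) : LFun (EFun t) = t := by
  have h3 : (3:ℝ) ≤ EFun t := by
    have h2 : (2:ℝ) ≤ Real.exp t := by linarith [Real.add_one_le_exp t]
    calc (3:ℝ) ≤ Real.exp 2 := by linarith [Real.add_one_le_exp (2:ℝ)]
      _ ≤ Real.exp (Real.exp t) := Real.exp_le_exp.2 h2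
  unfold LFun
  rw [max_eq_left h3]
  unfold EFun
  rw [Real.log_exp, Real.log_exp]

noncomputable def aPt (n : ℕ) : ℝ := Real.exp (π/2 + n*(2*π)) - 1
noncomputable def bPt (n : ℕ) : ℝ := Real.exp (π/2 + π + n*(2*π)) - 1

lemma gFun_aPt (n : ℕ) : gFun (aPt n) = aPt n := by
  unfold gFun aPt
  rw [sub_add_cancel, Real.log_exp, Real.sin_add_nat_mul_two_pi, Real.sin_pi_div_two, mul_one]

lemma gFun_bPt (n : ℕ) : gFun (bPt n) = -(bPt n) := by
  unfold gFun bPt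
  rw [sub_add_cancel, Real.log_exp, Real.sin_add_nat_mul_two_pi,
    show π/2 + π = π/2 + π from rfl, Real.sin_add_pi, Real.sin_pi_div_two]
  ring

lemma aPt_ge (n : ℕ) : 1 + (n:ℝ) ≤ aPt n := by
  have h := Real.add_one_le_exp (π/2 + n*(2*π))
  have hpi := Real.pi_gt_three
  have hn : (0:ℝ) ≤ n := Nat.cast_nonneg n
  unfold aPt; nlinarith

lemma bPt_ge (n : ℕ) : 1 + (n:ℝ) ≤ bPt n := by
  have h := Real.add_one_le_exp (π/2 + π + n*(2*π))
  have hpi := Real.pi_gt_three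
  have hn : (0:ℝ) ≤ n := Nat.cast_nonneg n
  unfold bPt; nlinarith

lemma aPt_le_bPt (n : ℕ) : aPt n ≤ bPt n := by
  unfold aPt bPt
  have : π/2 + n*(2*π) ≤ π/2 + π + n*(2*π) := by linarith [Real.pi_gt_three]
  linarith [Real.exp_le_exp.2 this]

lemma bPt_le_aPt_succ (n : ℕ) : bPt n ≤ aPt (n+1) := by
  unfold aPt bPt
  have : π/2 + π + n*(2*π) ≤ π/2 + (n+1:ℕ)*(2*π) := by
    push_cast; nlinarith [Real.pi_gt_three]
  linarith [Real.exp_le_exp.2 this]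

noncomputable def PsiFun (x : ℝ) : ℝ := Real.exp (gFun (LFun x))

theorem stmt7' :
    ∃ Ψ : ℝ → ℝ, (∀ x : ℝ, 0 ≤ x → 0 < Ψ x) ∧ Doubling Ψ ∧
      ¬ EssInc Ψ ∧ ¬ EssDec Ψ := by
  refine ⟨PsiFun, fun x _ => Real.exp_pos _, ?_, ?_, ?_⟩
  · -- Doubling
    refine ⟨Real.exp (-2), Real.exp_pos _, Real.exp 2, Real.exp_pos _, fun x hx => ?_⟩
    obtain ⟨h1, h2⟩ := LFun_sq hx
    have hkey : |gFun (LFun (x^2)) - gFun (LFun x)| ≤ 2 := by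
      calc |gFun (LFun (x^2)) - gFun (LFun x)| ≤ 2 * (LFun (x^2) - LFun x) :=
          gFun_incr (LFun_nonneg x) h1
        _ ≤ 2 := by linarith
    have habs := abs_le.1 hkey
    constructor
    · rw [PsiFun, PsiFun, ← Real.exp_add]
      exact Real.exp_le_exp.2 (by linarith [habs.1])
    · rw [PsiFun, PsiFun, ← Real.exp_add]
      exact Real.exp_le_exp.2 (by linarith [habs.2])
  · -- not EssInc
    rintro ⟨C, hC, h⟩
    set n : ℕ := ⌈Real.log C⌉₊ + 1 with hn
    have ha1 : 1 ≤ aPt n := by linarith [aPt_ge n, Nat.cast_nonneg (α := ℝ) n]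
    have hb1 : 1 ≤ bPt n := by linarith [bPt_ge n, Nat.cast_nonneg (α := ℝ) n]
    have hx := h (EFun (aPt n)) (EFun (bPt n)) (le_of_lt (Real.exp_pos _))
      (EFun_mono (aPt_le_bPt n))
    rw [PsiFun, PsiFun, LFun_EFun ha1, LFun_EFun hb1, gFun_aPt, gFun_bPt] at hx
    -- hx : exp (aPt n) ≤ C * exp (-(bPt n))
    have hlt : Real.log C < aPt n + bPt n := by
      have h1 : Real.log C ≤ (⌈Real.log C⌉₊ : ℝ) := Nat.le_ceil _
      have h2 : ((⌈Real.log C⌉₊ : ℝ)) + 1 ≤ (n:ℝ) := by rw [hn]; push_cast; linarith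
      linarith [aPt_ge n, bPt_ge n, Nat.cast_nonneg (α := ℝ) n]
    have : C * Real.exp (-(bPt n)) < Real.exp (aPt n) := by
      have := Real.exp_lt_exp.2 hlt
      rw [Real.exp_add] at this
      calc C * Real.exp (-(bPt n)) = Real.exp (Real.log C) * Real.exp (-(bPt n)) := by
            rw [Real.exp_log hC]
        _ < Real.exp (aPt n) * Real.exp (bPt n) * Real.exp (-(bPt n)) :=
            mul_lt_mul_of_pos_right this (Real.exp_pos _)
        _ = Real.exp (aPt n) := by rw [mul_assoc, ← Real.exp_add, add_neg_cancel, Real.exp_zero, mul_one]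
    linarith
  · -- not EssDec
    rintro ⟨C, hC, h⟩
    set n : ℕ := ⌈Real.log C⌉₊ + 1 with hn
    have ha1 : 1 ≤ aPt (n+1) := by linarith [aPt_ge (n+1), Nat.cast_nonneg (α := ℝ) (n+1)]
    have hb1 : 1 ≤ bPt n := by linarith [bPt_ge n, Nat.cast_nonneg (α := ℝ) n]
    have hx := h (EFun (bPt n)) (EFun (aPt (n+1))) (le_of_lt (Real.exp_pos _))
      (EFun_mono (bPt_le_aPt_succ n))
    rw [PsiFun, PsiFun, LFun_EFun ha1, LFun_EFun hb1, gFun_aPt, gFun_bPt] at hx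
    -- hx : exp (aPt (n+1)) ≤ C * exp (-(bPt n))
    have hlt : Real.log C < aPt (n+1) + bPt n := by
      have h1 : Real.log C ≤ (⌈Real.log C⌉₊ : ℝ) := Nat.le_ceil _
      have h2 : ((⌈Real.log C⌉₊ : ℝ)) + 1 ≤ (n:ℝ) := by rw [hn]; push_cast; linarith
      have h3 : (n:ℝ) ≤ (n+1:ℕ) := by push_cast; linarith
      linarith [aPt_ge (n+1), bPt_ge n, Nat.cast_nonneg (α := ℝ) n]
    have : C * Real.exp (-(bPt n)) < Real.exp (aPt (n+1)) := by
      have := Real.exp_lt_exp.2 hlt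
      rw [Real.exp_add] at this
      calc C * Real.exp (-(bPt n)) = Real.exp (Real.log C) * Real.exp (-(bPt n)) := by
            rw [Real.exp_log hC]
        _ < Real.exp (aPt (n+1)) * Real.exp (bPt n) * Real.exp (-(bPt n)) := by
            exact mul_lt_mul_of_pos_right this (Real.exp_pos _)
        _ = Real.exp (aPt (n+1)) := by rw [mul_assoc, ← Real.exp_add, add_neg_cancel, Real.exp_zero, mul_one]
    linarith


theorem stmt7 :
    ∃ Ψ : ℝ → ℝ, (∀ x : ℝ, 0 ≤ x → 0 < Ψ x) ∧ Doubling Ψ ∧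
      ¬ EssInc Ψ ∧ ¬ EssDec Ψ := by
  exact stmt7'
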